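/- arXiv:2106.12369 — 5 statements merged into one kernel-verified Lean document; each statement's English description precedes it below -/
import Mathlib

section
/- Let −1 < p < 0 and x, y ∈ ℝ^d (with the convention that |z|^p z = 0 at z = 0 extended by continuity or the inequality interpreted for x, y where defined). Then the segment average satisfies ∫₀¹ |τx + (1−τ)y|^p dτ ≤ (2/(p+1)) |x − y|^p, whenever x ≠ y. -/
open MeasureTheory intervalIntegral Real Set

private lemma abs_rpow_ii {p : ℝ} (hp : -1 < p) (a b : ℝ) :
    IntervalIntegrable (fun s : ℝ => |s| ^ p) volume a b := by
  suffices H : ∀ A : ℝ, IntervalIntegrable (fun s : ℝ => |s| ^ p) volume 0 A from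
    (H a).symm.trans (H b)
  have Hpos : ∀ A : ℝ, 0 ≤ A → IntervalIntegrable (fun s : ℝ => |s| ^ p) volume 0 A := by
    intro A hA
    refine (intervalIntegrable_rpow' (a := 0) (b := A) hp).congr_ae ?_
    rw [Filter.EventuallyEq, ae_restrict_iff' measurableSet_uIoc]
    filter_upwards with s hs
    rw [uIoc_of_le hA] at hs
    rw [abs_of_pos hs.1]
  intro A
  rcases le_total 0 A with hA | hA
  · exact Hpos A hA
  · have h := (IntervalIntegrable.iff_comp_neg (a := 0) (b := -A) (f := fun s : ℝ => |s| ^ p) (h := enorm_ne_top)).mp (Hpos (-A) (by linarith))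
    simpa using h

theorem stmt5 (d : ℕ) (hd : 1 ≤ d) (p : ℝ) (hp1 : -1 < p) (hp0 : p < 0)
    (x y : EuclideanSpace ℝ (Fin d)) (hxy : x ≠ y) :
    ∫ τ in (0:ℝ)..1, ‖τ • x + (1 - τ) • y‖ ^ p ≤ 2 / (p + 1) * ‖x - y‖ ^ p := by
  have hp1' : (0:ℝ) < p + 1 := by linarith
  set v := x - y with hv
  have hvn : (0:ℝ) < ‖v‖ := by
    rw [hv, norm_sub_pos_iff]; exact hxy
  set c : ℝ := -(inner ℝ y v : ℝ) / ‖v‖ ^ 2 with hc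
  have hv2 : (0:ℝ) < ‖v‖ ^ 2 := by positivity
  -- pointwise key bound
  have key : ∀ τ : ℝ, τ ≠ c → ‖τ • x + (1 - τ) • y‖ ^ p ≤ ‖v‖ ^ p * |τ - c| ^ p := by
    intro τ hτ
    have hγ : τ • x + (1 - τ) • y = y + τ • v := by
      rw [hv]; rw [smul_sub, sub_smul, one_smul]; abel
    have hinner : (inner ℝ (y + τ • v) v : ℝ) = (τ - c) * ‖v‖ ^ 2 := by
      rw [inner_add_left, real_inner_smul_left, real_inner_self_eq_norm_sq, hc]
      field_simp
      ring
    have hCS : |(inner ℝ (y + τ • v) v : ℝ)| ≤ ‖y + τ • v‖ * ‖v‖ := abs_real_inner_le_norm _ _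
    have hlow : ‖v‖ * |τ - c| ≤ ‖y + τ • v‖ := by
      rw [hinner, abs_mul, abs_of_pos hv2] at hCS
      rw [sq] at hCS
      have := mul_le_mul_of_nonneg_right (le_of_eq (rfl : ‖y + τ • v‖ * ‖v‖ = ‖y + τ • v‖ * ‖v‖)) (le_refl (0:ℝ))
      nlinarith [abs_nonneg (τ - c), norm_nonneg (y + τ • v)]
    have habs0 : (0:ℝ) < |τ - c| := abs_pos.mpr (sub_ne_zero.mpr hτ)
    have hpos : 0 < ‖v‖ * |τ - c| := by positivity
    rw [hγ]
    calc ‖y + τ • v‖ ^ p ≤ (‖v‖ * |τ - c|) ^ p :=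
          Real.rpow_le_rpow_of_nonpos hpos hlow hp0.le
      _ = ‖v‖ ^ p * |τ - c| ^ p := Real.mul_rpow hvn.le (abs_nonneg _)
  -- integrability of the majorant
  have habs : ∀ a b : ℝ, IntervalIntegrable (fun τ : ℝ => |τ - c| ^ p) volume a b := by
    intro a b
    have h := (abs_rpow_ii hp1 (a - c) (b - c)).comp_sub_right c
    simpa using h
  have hg_int : IntervalIntegrable (fun τ : ℝ => ‖v‖ ^ p * |τ - c| ^ p) volume 0 1 :=
    (habs 0 1).const_mul _
  have hane : ∀ᵐ τ : ℝ ∂volume, τ ≠ c := by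
    filter_upwards [MeasureTheory.compl_mem_ae_iff.mpr (measure_singleton c)] with τ hτ
    exact hτ
  have hγc : Continuous fun τ : ℝ => τ • x + (1 - τ) • y := by continuity
  have hf_meas : AEStronglyMeasurable (fun τ : ℝ => ‖τ • x + (1 - τ) • y‖ ^ p)
      (volume.restrict (Set.uIoc (0:ℝ) 1)) :=
    Measurable.aestronglyMeasurable (by fun_prop)
  have hf_int : IntervalIntegrable (fun τ : ℝ => ‖τ • x + (1 - τ) • y‖ ^ p) volume 0 1 := by
    refine hg_int.mono_fun' hf_meas ?_
    refine ae_restrict_of_ae ?_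
    filter_upwards [hane] with τ hτ
    rw [Real.norm_eq_abs, abs_of_nonneg (Real.rpow_nonneg (norm_nonneg _) _)]
    exact key τ hτ
  have step1 : (∫ τ in (0:ℝ)..1, ‖τ • x + (1 - τ) • y‖ ^ p)
      ≤ ∫ τ in (0:ℝ)..1, ‖v‖ ^ p * |τ - c| ^ p := by
    refine integral_mono_ae zero_le_one hf_int hg_int ?_
    filter_upwards [hane] with τ hτ using key τ hτ
  -- bound the scalar integral
  have hane0 : ∀ᵐ τ : ℝ ∂volume, τ ≠ (0:ℝ) := by
    filter_upwards [MeasureTheory.compl_mem_ae_iff.mpr (measure_singleton (0:ℝ))] with τ hτ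
    exact hτ
  have hane1 : ∀ᵐ τ : ℝ ∂volume, τ ≠ (1:ℝ) := by
    filter_upwards [MeasureTheory.compl_mem_ae_iff.mpr (measure_singleton (1:ℝ))] with τ hτ
    exact hτ
  have hI : (∫ τ in (0:ℝ)..1, |τ - c| ^ p) ≤ 2 / (p + 1) := by
    rcases le_or_gt c 0 with hc0 | hc0
    · have hmono : (fun τ : ℝ => |τ - c| ^ p) ≤ᵐ[volume.restrict (Icc (0:ℝ) 1)]
          fun τ => τ ^ p := by
        filter_upwards [ae_restrict_of_ae hane0, ae_restrict_mem measurableSet_Icc]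
          with τ hτ0 hτm
        have hτp : 0 < τ := lt_of_le_of_ne hτm.1 (Ne.symm hτ0)
        rw [abs_of_pos (by linarith : (0:ℝ) < τ - c)]
        exact Real.rpow_le_rpow_of_nonpos hτp (by linarith) hp0.le
      have h2 : (∫ τ in (0:ℝ)..1, |τ - c| ^ p) ≤ ∫ τ in (0:ℝ)..1, τ ^ p :=
        integral_mono_ae_restrict zero_le_one (habs 0 1) (intervalIntegrable_rpow' hp1) hmono
      have h3 : (∫ τ in (0:ℝ)..1, τ ^ p) = 1 / (p + 1) := by
        rw [integral_rpow (Or.inl hp1)]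
        rw [Real.one_rpow, Real.zero_rpow (by linarith : p + 1 ≠ 0)]
        ring
      rw [h3] at h2
      calc (∫ τ in (0:ℝ)..1, |τ - c| ^ p) ≤ 1 / (p + 1) := h2
        _ ≤ 2 / (p + 1) := by gcongr; norm_num
    · rcases le_or_gt 1 c with hc1 | hc1
      · have hmono : (fun τ : ℝ => |τ - c| ^ p) ≤ᵐ[volume.restrict (Icc (0:ℝ) 1)]
            fun τ => (1 - τ) ^ p := by
          filter_upwards [ae_restrict_of_ae hane1, ae_restrict_mem measurableSet_Icc]
            with τ hτ1 hτm
          have hτp : 0 < 1 - τ := by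
            rcases lt_or_eq_of_le hτm.2 with h | h
            · linarith
            · exact absurd h hτ1
          rw [abs_sub_comm, abs_of_pos (by linarith : (0:ℝ) < c - τ)]
          exact Real.rpow_le_rpow_of_nonpos hτp (by linarith) hp0.le
        have hii : IntervalIntegrable (fun τ : ℝ => (1 - τ) ^ p) volume 0 1 := by
          have h := (intervalIntegrable_rpow' (a := (0:ℝ)) (b := 1) hp1).comp_sub_left 1
          simpa using h.symm
        have h2 : (∫ τ in (0:ℝ)..1, |τ - c| ^ p) ≤ ∫ τ in (0:ℝ)..1, (1 - τ) ^ p :=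
          integral_mono_ae_restrict zero_le_one (habs 0 1) hii hmono
        have h3 : (∫ τ in (0:ℝ)..1, (1 - τ) ^ p) = 1 / (p + 1) := by
          rw [integral_comp_sub_left (fun s : ℝ => s ^ p) 1]
          norm_num
          rw [integral_rpow (Or.inl hp1)]
          rw [Real.one_rpow, Real.zero_rpow (by linarith : p + 1 ≠ 0)]
          ring
        rw [h3] at h2
        calc (∫ τ in (0:ℝ)..1, |τ - c| ^ p) ≤ 1 / (p + 1) := h2
          _ ≤ 2 / (p + 1) := by gcongr; norm_num
      · -- 0 < c < 1
        have hsplit : (∫ τ in (0:ℝ)..1, |τ - c| ^ p)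
            = (∫ τ in (0:ℝ)..c, |τ - c| ^ p) + ∫ τ in c..1, |τ - c| ^ p :=
          (integral_add_adjacent_intervals (habs 0 c) (habs c 1)).symm
        have hA : (∫ τ in (0:ℝ)..c, |τ - c| ^ p) = c ^ (p + 1) / (p + 1) := by
          have hcongr : (∫ τ in (0:ℝ)..c, |τ - c| ^ p)
              = ∫ τ in (0:ℝ)..c, (c - τ) ^ p := by
            refine integral_congr fun τ hτ => ?_
            rw [uIcc_of_le hc0.le] at hτ
            rw [abs_sub_comm, abs_of_nonneg (by linarith [hτ.2] : (0:ℝ) ≤ c - τ)]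
          rw [hcongr, integral_comp_sub_left (fun s : ℝ => s ^ p) c, sub_self, sub_zero,
            integral_rpow (Or.inl hp1), Real.zero_rpow (by linarith : p + 1 ≠ 0)]
          ring
        have hB : (∫ τ in c..1, |τ - c| ^ p) = (1 - c) ^ (p + 1) / (p + 1) := by
          have hcongr : (∫ τ in c..1, |τ - c| ^ p) = ∫ τ in c..1, (τ - c) ^ p := by
            refine integral_congr fun τ hτ => ?_
            rw [uIcc_of_le hc1.le] at hτ
            rw [abs_of_nonneg (by linarith [hτ.1] : (0:ℝ) ≤ τ - c)]
          rw [hcongr, integral_comp_sub_right (fun s : ℝ => s ^ p) c, sub_self,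
            integral_rpow (Or.inl hp1), Real.zero_rpow (by linarith : p + 1 ≠ 0)]
          ring
        have hc_le : c ^ (p + 1) ≤ 1 :=
          Real.rpow_le_one hc0.le hc1.le hp1'.le
        have h1c_le : (1 - c) ^ (p + 1) ≤ 1 :=
          Real.rpow_le_one (by linarith) (by linarith) hp1'.le
        rw [hsplit, hA, hB]
        rw [← add_div, div_le_div_iff₀ hp1' hp1']
        nlinarith
  -- put everything together
  have step2 : (∫ τ in (0:ℝ)..1, ‖v‖ ^ p * |τ - c| ^ p)
      = ‖v‖ ^ p * ∫ τ in (0:ℝ)..1, |τ - c| ^ p := by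
    rw [intervalIntegral.integral_const_mul]
  calc (∫ τ in (0:ℝ)..1, ‖τ • x + (1 - τ) • y‖ ^ p)
      ≤ ∫ τ in (0:ℝ)..1, ‖v‖ ^ p * |τ - c| ^ p := step1
    _ = ‖v‖ ^ p * ∫ τ in (0:ℝ)..1, |τ - c| ^ p := step2
    _ ≤ ‖v‖ ^ p * (2 / (p + 1)) :=
        mul_le_mul_of_nonneg_left hI (Real.rpow_nonneg (norm_nonneg _) _)
    _ = 2 / (p + 1) * ‖x - y‖ ^ p := by rw [← hv]; ring
end

section
/- For −1 < p < 0 and all x, y ∈ ℝ^d: | |x|^p x − |y|^p y | ≤ 2 |x − y|^{1+p}, where |z|^p z is interpreted as 0 when z = 0. -/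
open Real

lemma aux_rpow_add_le {a b q : ℝ} (ha : 0 ≤ a) (hb : 0 ≤ b) (h0 : 0 ≤ q) (h1 : q ≤ 1) :
    (a + b) ^ q ≤ a ^ q + b ^ q := by
  have := NNReal.rpow_add_le_add_rpow ⟨a, ha⟩ ⟨b, hb⟩ h0 h1
  exact_mod_cast this

lemma aux_rpow_sub_le {a b q : ℝ} (hb : 0 ≤ b) (hba : b ≤ a)
    (h0 : 0 ≤ q) (h1 : q ≤ 1) : a ^ q - b ^ q ≤ (a - b) ^ q := by
  have h : a ^ q ≤ (a - b) ^ q + b ^ q := by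
    have := aux_rpow_add_le (a := a - b) (b := b) (by linarith) hb h0 h1
    simpa [sub_add_cancel] using this
  linarith

lemma aux_abs_rpow_sub {a b q : ℝ} (ha : 0 ≤ a) (hb : 0 ≤ b)
    (h0 : 0 ≤ q) (h1 : q ≤ 1) : |a ^ q - b ^ q| ≤ |a - b| ^ q := by
  rcases le_total b a with h | h
  · rw [abs_of_nonneg (by linarith : (0:ℝ) ≤ a - b),
      abs_of_nonneg (sub_nonneg.2 (Real.rpow_le_rpow hb h h0))]
    exact aux_rpow_sub_le hb h h0 h1
  · rw [abs_of_nonpos (by linarith : a - b ≤ 0),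
      abs_of_nonpos (sub_nonpos.2 (Real.rpow_le_rpow ha h h0)), neg_sub, neg_sub]
    exact aux_rpow_sub_le ha h h0 h1

/-- The scalar key inequality. -/
lemma aux_key {a b q u : ℝ} (ha : 0 < a) (hb : 0 < b) (hq0 : 0 < q) (hq1 : q < 1)
    (hA : (a - b) ^ 2 ≤ u) (hB : u ≤ (a + b) ^ 2) :
    (a ^ q) ^ 2 + (b ^ q) ^ 2 - a ^ q * b ^ q / (a * b) * (a ^ 2 + b ^ 2 - u)
      ≤ 4 * u ^ q := by
  set A : ℝ := (a - b) ^ 2 with hAdef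
  set B : ℝ := (a + b) ^ 2 with hBdef
  have hBA : B - A = 4 * (a * b) := by ring
  have hBApos : (0:ℝ) < B - A := by rw [hBA]; positivity
  obtain ⟨lam, hlam⟩ : ∃ l : ℝ, l = (B - u) / (B - A) := ⟨_, rfl⟩
  obtain ⟨mu, hmu⟩ : ∃ m : ℝ, m = (u - A) / (B - A) := ⟨_, rfl⟩
  have hlam0 : 0 ≤ lam := by rw [hlam]; exact div_nonneg (by linarith) hBApos.le
  have hmu0 : 0 ≤ mu := by rw [hmu]; exact div_nonneg (by linarith) hBApos.le
  have hsum : lam + mu = 1 := by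
    rw [hlam, hmu, ← add_div]
    field_simp
    ring
  have hu : lam * A + mu * B = u := by rw [hlam, hmu]; field_simp; ring
  have hA0 : (0:ℝ) ≤ A := sq_nonneg _
  have hB0 : (0:ℝ) ≤ B := sq_nonneg _
  -- value at A
  have hLA : (a ^ q) ^ 2 + (b ^ q) ^ 2 - a ^ q * b ^ q / (a * b) * (a ^ 2 + b ^ 2 - A)
      = (a ^ q - b ^ q) ^ 2 := by
    have : a ^ 2 + b ^ 2 - A = 2 * (a * b) := by rw [hAdef]; ring
    rw [this]; field_simp; ring
  have hLB : (a ^ q) ^ 2 + (b ^ q) ^ 2 - a ^ q * b ^ q / (a * b) * (a ^ 2 + b ^ 2 - B)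
      = (a ^ q + b ^ q) ^ 2 := by
    have : a ^ 2 + b ^ 2 - B = -(2 * (a * b)) := by rw [hBdef]; ring
    rw [this]; field_simp; ring
  -- endpoint bounds
  have hendA : (a ^ q - b ^ q) ^ 2 ≤ 4 * A ^ q := by
    have h1 : |a ^ q - b ^ q| ≤ |a - b| ^ q :=
      aux_abs_rpow_sub ha.le hb.le hq0.le hq1.le
    have h2 : (a ^ q - b ^ q) ^ 2 ≤ (|a - b| ^ q) ^ 2 := by
      rw [← sq_abs]
      exact pow_le_pow_left₀ (abs_nonneg _) h1 2
    have h3 : (|a - b| ^ q) ^ 2 = A ^ q := by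
      rw [hAdef, ← sq_abs (a - b), ← Real.rpow_natCast_mul (abs_nonneg _) 2 q,
        ← Real.rpow_mul_natCast (abs_nonneg _) q 2]
      norm_num [mul_comm]
    nlinarith [Real.rpow_nonneg hA0 q]
  have hendB : (a ^ q + b ^ q) ^ 2 ≤ 4 * B ^ q := by
    have h1 : a ^ q ≤ (a + b) ^ q := Real.rpow_le_rpow ha.le (by linarith) hq0.le
    have h2 : b ^ q ≤ (a + b) ^ q := Real.rpow_le_rpow hb.le (by linarith) hq0.le
    have h3 : ((a + b) ^ q) ^ 2 = B ^ q := by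
      rw [hBdef, ← Real.rpow_natCast_mul (by linarith : (0:ℝ) ≤ a + b) 2 q,
        ← Real.rpow_mul_natCast (by linarith : (0:ℝ) ≤ a + b) q 2]
      norm_num [mul_comm]
    nlinarith [Real.rpow_nonneg ha.le q, Real.rpow_nonneg hb.le q]
  -- concavity
  have hconc : lam * A ^ q + mu * B ^ q ≤ u ^ q := by
    have := (Real.strictConcaveOn_rpow hq0 hq1).concaveOn.2
      (Set.mem_Ici.2 hA0) (Set.mem_Ici.2 hB0) hlam0 hmu0 hsum
    simpa [smul_eq_mul, hu] using this
  -- affinity in u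
  have haff : (a ^ q) ^ 2 + (b ^ q) ^ 2 - a ^ q * b ^ q / (a * b) * (a ^ 2 + b ^ 2 - u)
      = lam * ((a ^ q - b ^ q) ^ 2) + mu * ((a ^ q + b ^ q) ^ 2) := by
    rw [← hLA, ← hLB]
    have gen : ∀ k S : ℝ, S - k * (a ^ 2 + b ^ 2 - u)
        = lam * (S - k * (a ^ 2 + b ^ 2 - A)) + mu * (S - k * (a ^ 2 + b ^ 2 - B)) := by
      intro k S
      linear_combination (k * (a ^ 2 + b ^ 2) - S) * hsum - k * hu
    have := gen (a ^ q * b ^ q / (a * b)) ((a ^ q) ^ 2 + (b ^ q) ^ 2)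
    linarith [this]
  rw [haff]
  calc lam * ((a ^ q - b ^ q) ^ 2) + mu * ((a ^ q + b ^ q) ^ 2)
      ≤ lam * (4 * A ^ q) + mu * (4 * B ^ q) := by
        gcongr
    _ = 4 * (lam * A ^ q + mu * B ^ q) := by ring
    _ ≤ 4 * u ^ q := by linarith

theorem stmt6 (d : ℕ) (hd : 1 ≤ d) (p : ℝ) (hp1 : -1 < p) (hp0 : p < 0)
    (x y : EuclideanSpace ℝ (Fin d)) :
    ‖(‖x‖ ^ p) • x - (‖y‖ ^ p) • y‖ ≤ 2 * ‖x - y‖ ^ (1 + p) := by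
  have hq0 : (0:ℝ) < 1 + p := by linarith
  have hq1 : (1:ℝ) + p < 1 := by linarith
  rcases eq_or_ne x 0 with hx | hx
  · subst hx
    rcases eq_or_ne y 0 with hy | hy
    · subst hy
      simp [Real.zero_rpow (show (1:ℝ) + p ≠ 0 by linarith)]
    · have hb : 0 < ‖y‖ := norm_pos_iff.2 hy
      have e : ‖y‖ ^ p * ‖y‖ = ‖y‖ ^ (1 + p) := by
        rw [← Real.rpow_add_one hb.ne' p, add_comm]
      have e1 : ‖(‖(0:EuclideanSpace ℝ (Fin d))‖ ^ p) • (0:EuclideanSpace ℝ (Fin d))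
          - (‖y‖ ^ p) • y‖ = ‖y‖ ^ (1 + p) := by
        rw [smul_zero, zero_sub, norm_neg, norm_smul, Real.norm_eq_abs,
          abs_of_nonneg (Real.rpow_nonneg (norm_nonneg y) p), e]
      have e2 : ‖(0:EuclideanSpace ℝ (Fin d)) - y‖ = ‖y‖ := by rw [zero_sub, norm_neg]
      rw [e1, e2]
      nlinarith [Real.rpow_nonneg (norm_nonneg y) (1 + p)]
  rcases eq_or_ne y 0 with hy | hy
  · subst hy
    have ha : 0 < ‖x‖ := norm_pos_iff.2 hx
    have e : ‖x‖ ^ p * ‖x‖ = ‖x‖ ^ (1 + p) := by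
      rw [← Real.rpow_add_one ha.ne' p, add_comm]
    have e1 : ‖(‖x‖ ^ p) • x - (‖(0:EuclideanSpace ℝ (Fin d))‖ ^ p) •
        (0:EuclideanSpace ℝ (Fin d))‖ = ‖x‖ ^ (1 + p) := by
      rw [smul_zero, sub_zero, norm_smul, Real.norm_eq_abs,
        abs_of_nonneg (Real.rpow_nonneg (norm_nonneg x) p), e]
    have e2 : ‖x - (0:EuclideanSpace ℝ (Fin d))‖ = ‖x‖ := by rw [sub_zero]
    rw [e1, e2]
    nlinarith [Real.rpow_nonneg (norm_nonneg x) (1 + p)]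
  -- main case
  have ha : 0 < ‖x‖ := norm_pos_iff.2 hx
  have hb : 0 < ‖y‖ := norm_pos_iff.2 hy
  have hap : ‖x‖ ^ p * ‖x‖ = ‖x‖ ^ (1 + p) := by
    rw [← Real.rpow_add_one ha.ne' p, add_comm]
  have hbp : ‖y‖ ^ p * ‖y‖ = ‖y‖ ^ (1 + p) := by
    rw [← Real.rpow_add_one hb.ne' p, add_comm]
  have ht2 := norm_sub_sq_real x y
  have e1 : ‖(‖x‖ ^ p) • x‖ = ‖x‖ ^ (1 + p) := by
    rw [norm_smul, Real.norm_eq_abs, abs_of_nonneg (Real.rpow_nonneg (norm_nonneg x) p), hap]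
  have e2 : ‖(‖y‖ ^ p) • y‖ = ‖y‖ ^ (1 + p) := by
    rw [norm_smul, Real.norm_eq_abs, abs_of_nonneg (Real.rpow_nonneg (norm_nonneg y) p), hbp]
  have e3 : (inner ℝ ((‖x‖ ^ p) • x) ((‖y‖ ^ p) • y) : ℝ)
      = ‖x‖ ^ p * ‖y‖ ^ p * (inner ℝ x y : ℝ) := by
    rw [real_inner_smul_left, real_inner_smul_right]; ring
  have e5 : ‖x‖ ^ p * ‖y‖ ^ p = ‖x‖ ^ (1 + p) * ‖y‖ ^ (1 + p) / (‖x‖ * ‖y‖) := by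
    rw [← hap, ← hbp]
    field_simp
  have hL : ‖(‖x‖ ^ p) • x - (‖y‖ ^ p) • y‖ ^ 2
      = (‖x‖ ^ (1 + p)) ^ 2 + (‖y‖ ^ (1 + p)) ^ 2
        - ‖x‖ ^ (1 + p) * ‖y‖ ^ (1 + p) / (‖x‖ * ‖y‖)
          * (‖x‖ ^ 2 + ‖y‖ ^ 2 - ‖x - y‖ ^ 2) := by
    rw [norm_sub_sq_real, e1, e2, e3, e5]
    have e4 : ‖x‖ ^ 2 + ‖y‖ ^ 2 - ‖x - y‖ ^ 2 = 2 * (inner ℝ x y : ℝ) := by linarith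
    rw [e4]; ring
  have hA : (‖x‖ - ‖y‖) ^ 2 ≤ ‖x - y‖ ^ 2 := by
    have h := abs_norm_sub_norm_le x y
    calc (‖x‖ - ‖y‖) ^ 2 = |‖x‖ - ‖y‖| ^ 2 := by rw [sq_abs]
      _ ≤ ‖x - y‖ ^ 2 := pow_le_pow_left₀ (abs_nonneg _) h 2
  have hB : ‖x - y‖ ^ 2 ≤ (‖x‖ + ‖y‖) ^ 2 :=
    pow_le_pow_left₀ (norm_nonneg _) (norm_sub_le x y) 2
  have key := aux_key ha hb hq0 hq1 hA hB
  have h4 : (2 * ‖x - y‖ ^ (1 + p)) ^ 2 = 4 * (‖x - y‖ ^ 2) ^ (1 + p) := by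
    rw [mul_pow]
    have : (‖x - y‖ ^ (1 + p)) ^ 2 = (‖x - y‖ ^ 2) ^ (1 + p) := by
      rw [← Real.rpow_mul_natCast (norm_nonneg _) (1 + p) 2,
        ← Real.rpow_natCast_mul (norm_nonneg _) 2 (1 + p), mul_comm]
    rw [this]; norm_num
  have hsq : ‖(‖x‖ ^ p) • x - (‖y‖ ^ p) • y‖ ^ 2 ≤ (2 * ‖x - y‖ ^ (1 + p)) ^ 2 := by
    rw [hL, h4]; exact key
  exact le_of_pow_le_pow_left₀ (by norm_num) (by positivity) hsq
end

section
/- For any β > 0 and vectors x, y ∈ ℝ^d with x ≠ y, the segment integral satisfies ∫₀¹ |τx + (1−τ)y|^β dτ ≥ |x − y|^β / (2^{β+1} (β+1)). -/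
open intervalIntegral Real

lemma aux_int8 (β : ℝ) (hβ : 0 < β) :
    ∫ τ in (1/2:ℝ)..1, (τ - 1/2) ^ β = (1/2) ^ (β+1) / (β+1) := by
  rw [intervalIntegral.integral_comp_sub_right (fun u => u ^ β) (1/2)]
  norm_num
  rw [integral_rpow (Or.inl (by linarith))]
  rw [Real.zero_rpow (by linarith)]
  ring

lemma aux1_8 (β : ℝ) (hβ : 0 < β) (C : ℝ) (hC : 0 ≤ C) (f : ℝ → ℝ)
    (hf : Continuous f) (hnn : ∀ τ, 0 ≤ f τ)
    (hb : ∀ τ ∈ Set.Icc (1/2:ℝ) 1, C * (τ - 1/2) ^ β ≤ f τ) :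
    C / (2 ^ (β + 1) * (β + 1)) ≤ ∫ τ in (0:ℝ)..1, f τ := by
  have hI : ∀ a b : ℝ, IntervalIntegrable f MeasureTheory.volume a b :=
    fun a b => hf.intervalIntegrable a b
  have hg : Continuous fun τ : ℝ => C * (τ - 1/2) ^ β :=
    continuous_const.mul ((Real.continuous_rpow_const hβ.le).comp
      (continuous_id.sub continuous_const))
  have h1 : ∫ τ in (0:ℝ)..1, f τ
      = (∫ τ in (0:ℝ)..(1/2), f τ) + ∫ τ in (1/2:ℝ)..1, f τ :=
    (integral_add_adjacent_intervals (hI 0 (1/2)) (hI (1/2) 1)).symm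
  have h2 : 0 ≤ ∫ τ in (0:ℝ)..(1/2), f τ :=
    intervalIntegral.integral_nonneg (by norm_num) (fun u _ => hnn u)
  have h3 : ∫ τ in (1/2:ℝ)..1, C * (τ-1/2)^β ≤ ∫ τ in (1/2:ℝ)..1, f τ :=
    intervalIntegral.integral_mono_on (by norm_num)
      (hg.intervalIntegrable _ _) (hI _ _) hb
  have h4 : ∫ τ in (1/2:ℝ)..1, C * (τ-1/2)^β = C * ((1/2)^(β+1)/(β+1)) := by
    rw [intervalIntegral.integral_const_mul, aux_int8 β hβ]
  have h5 : (1/2:ℝ)^(β+1) = 1 / 2^(β+1) := by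
    rw [Real.div_rpow (by norm_num) (by norm_num), Real.one_rpow]
  have hβ1 : (0:ℝ) < β + 1 := by linarith
  have h2p : (0:ℝ) < 2 ^ (β+1) := Real.rpow_pos_of_pos (by norm_num) _
  have : C / (2 ^ (β + 1) * (β + 1)) = C * ((1/2)^(β+1)/(β+1)) := by
    rw [h5]; field_simp
  linarith [h3, h2, h1.ge, this]

lemma half8 (d : ℕ) (β : ℝ) (hβ : 0 < β) (x y : EuclideanSpace ℝ (Fin d))
    (hxy : x ≠ y)
    (ht : -(inner ℝ y (x - y) : ℝ) / ‖x - y‖^2 ≤ 1/2) :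
    ‖x - y‖ ^ β / (2 ^ (β + 1) * (β + 1)) ≤
      ∫ τ in (0:ℝ)..1, ‖τ • x + (1 - τ) • y‖ ^ β := by
  have hv : x - y ≠ 0 := sub_ne_zero.mpr hxy
  have hvn : 0 < ‖x - y‖ := norm_pos_iff.mpr hv
  set v := x - y with hvdef
  set t₀ : ℝ := -(inner ℝ y v : ℝ) / ‖v‖^2 with ht₀
  have hw : (inner ℝ (y + t₀ • v) v : ℝ) = 0 := by
    rw [inner_add_left, real_inner_smul_left, real_inner_self_eq_norm_sq, ht₀]
    field_simp
    ring
  have key : ∀ τ : ℝ, |τ - t₀| * ‖v‖ ≤ ‖τ • x + (1 - τ) • y‖ := by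
    intro τ
    have hγ : τ • x + (1 - τ) • y = (y + t₀ • v) + (τ - t₀) • v := by
      rw [hvdef]; module
    rw [hγ]
    have h2 : ‖(y + t₀ • v) + (τ - t₀) • v‖^2
        = ‖y + t₀ • v‖^2 + ‖(τ - t₀) • v‖^2 := by
      rw [norm_add_sq_real, real_inner_smul_right, hw]; ring
    have h3 : ‖(τ - t₀) • v‖^2 ≤ ‖(y + t₀ • v) + (τ - t₀) • v‖^2 := by
      rw [h2]; nlinarith [sq_nonneg ‖y + t₀ • v‖]
    have h4 := Real.sqrt_le_sqrt h3
    rw [Real.sqrt_sq (norm_nonneg _), Real.sqrt_sq (norm_nonneg _)] at h4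
    calc |τ - t₀| * ‖v‖ = ‖(τ - t₀) • v‖ := by
          rw [norm_smul, Real.norm_eq_abs]
      _ ≤ _ := h4
  apply aux1_8 β hβ _ (Real.rpow_nonneg (norm_nonneg v) β)
  · exact Continuous.rpow_const
      (((continuous_id.smul continuous_const).add
        ((continuous_const.sub continuous_id).smul continuous_const)).norm)
      (fun τ => Or.inr hβ.le)
  · exact fun τ => Real.rpow_nonneg (norm_nonneg _) β
  · intro τ hτ
    have h1 : (0:ℝ) ≤ τ - 1/2 := by linarith [hτ.1]
    have h2 : τ - 1/2 ≤ |τ - t₀| := by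
      rw [abs_sub_comm]
      calc τ - 1/2 ≤ τ - t₀ := by linarith
        _ ≤ |t₀ - τ| := by rw [abs_sub_comm]; exact le_abs_self _
    calc ‖v‖ ^ β * (τ - 1/2) ^ β = ((τ - 1/2) * ‖v‖) ^ β := by
          rw [Real.mul_rpow h1 (norm_nonneg v)]; ring
      _ ≤ (|τ - t₀| * ‖v‖) ^ β := by
          apply Real.rpow_le_rpow (by positivity)
            (mul_le_mul_of_nonneg_right h2 (norm_nonneg v)) hβ.le
      _ ≤ ‖τ • x + (1 - τ) • y‖ ^ β :=
          Real.rpow_le_rpow (by positivity) (key τ) hβ.le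

theorem stmt8 (d : ℕ) (hd : 1 ≤ d) (β : ℝ) (hβ : 0 < β)
    (x y : EuclideanSpace ℝ (Fin d)) (hxy : x ≠ y) :
    ‖x - y‖ ^ β / (2 ^ (β + 1) * (β + 1)) ≤
      ∫ τ in (0:ℝ)..1, ‖τ • x + (1 - τ) • y‖ ^ β := by
  have hv : x - y ≠ 0 := sub_ne_zero.mpr hxy
  have hvn : 0 < ‖x - y‖ := norm_pos_iff.mpr hv
  rcases le_or_gt (-(inner ℝ y (x - y) : ℝ) / ‖x - y‖^2) (1/2) with h | h
  · exact half8 d β hβ x y hxy h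
  · -- swap x and y
    have hnorm : ‖x - y‖ = ‖y - x‖ := by rw [norm_sub_rev]
    have ht' : -(inner ℝ x (y - x) : ℝ) / ‖y - x‖^2 ≤ 1/2 := by
      have hx : -(inner ℝ x (y - x) : ℝ)
          = ‖x - y‖^2 + (inner ℝ y (x - y) : ℝ) := by
        have e1 : (inner ℝ x (y - x) : ℝ) = -(inner ℝ x (x - y) : ℝ) := by
          rw [← inner_neg_right]; congr 1; abel
        rw [e1, neg_neg]
        have e2 : (inner ℝ (x - y) (x - y) : ℝ)
            = (inner ℝ x (x - y) : ℝ) - (inner ℝ y (x - y) : ℝ) := by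
          rw [inner_sub_left]
        rw [real_inner_self_eq_norm_sq] at e2
        linarith
      rw [← hnorm, hx]
      have h2 : (0:ℝ) < ‖x - y‖^2 := by positivity
      rw [div_le_iff₀ h2]
      rw [lt_iff_not_ge, div_le_iff₀ h2, not_le] at h
      nlinarith
    have hswap := half8 d β hβ y x (Ne.symm hxy) ht'
    rw [← hnorm] at hswap
    have hint : ∫ τ in (0:ℝ)..1, ‖τ • y + (1 - τ) • x‖ ^ β
        = ∫ τ in (0:ℝ)..1, ‖τ • x + (1 - τ) • y‖ ^ β := by
      have := intervalIntegral.integral_comp_sub_left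
        (fun τ : ℝ => ‖τ • x + (1 - τ) • y‖ ^ β) 1 (a := 0) (b := 1)
      simp only [sub_zero, sub_self] at this
      rw [← this]
      apply intervalIntegral.integral_congr
      intro τ _
      simp only
      congr 1
      rw [show (1 : ℝ) - (1 - τ) = τ by ring, add_comm]
    rwa [hint] at hswap
end

section
/- Let F(z) = a₋₁ z^{−α} + a₀ + Σ_{i=1}^N a_i z^{α_i} with α ∈ (0,1), 0 < α₁ < ⋯ < α_N, coefficients a₋₁, a₀, a_N ≥ a_* > 0 and a_i ≥ 0, and set s = α_N + 2. Then for all x, y ∈ ℝ^d: (F(|x|)x − F(|y|)y) · (x − y) ≥ C₃ |x − y|^s, where C₃ = a_*(1−α)/(2^{s−1}(s−1)). -/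
open scoped RealInnerProductSpace

private lemma rpow_mul_self {t : ℝ} (β : ℝ) (hβ : β + 1 ≠ 0) :
    t ^ β * t = t ^ (β + 1) := by
  rcases eq_or_ne t 0 with rfl | h
  · simp [Real.zero_rpow hβ]
  · rw [Real.rpow_add_one h]

private lemma rpow_mul_sq {t : ℝ} (ht : 0 ≤ t) (β : ℝ) (h2 : β + 2 ≠ 0) :
    t ^ β * t ^ (2:ℕ) = t ^ (β + 2) := by
  rcases eq_or_lt_of_le ht with h | h
  · rw [← h]; simp [Real.zero_rpow h2]
  · rw [Real.rpow_add h β 2, show (2:ℝ) = ((2:ℕ):ℝ) by norm_num, Real.rpow_natCast]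

private lemma mono_scalar (β : ℝ) (hβ : -1 < β) {p q r : ℝ} (hp : 0 ≤ p) (hq : 0 ≤ q)
    (hr : r ≤ p * q) :
    0 ≤ p ^ β * p ^ (2:ℕ) + q ^ β * q ^ (2:ℕ) - (p ^ β + q ^ β) * r := by
  have h1 : β + 1 ≠ 0 := by linarith
  have h2 : β + 2 ≠ 0 := by linarith
  have e1 : p ^ β * p = p ^ (β+1) := rpow_mul_self β h1
  have e2 : q ^ β * q = q ^ (β+1) := rpow_mul_self β h1
  have hpb : 0 ≤ p ^ β := Real.rpow_nonneg hp β
  have hqb : 0 ≤ q ^ β := Real.rpow_nonneg hq β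
  have hmul : (p ^ β + q ^ β) * r ≤ (p ^ β + q ^ β) * (p * q) :=
    mul_le_mul_of_nonneg_left hr (by linarith)
  have key : 0 ≤ (p ^ (β+1) - q ^ (β+1)) * (p - q) := by
    rcases le_total p q with h | h
    · have := Real.rpow_le_rpow hp h (by linarith : 0 ≤ β + 1)
      nlinarith
    · have := Real.rpow_le_rpow hq h (by linarith : 0 ≤ β + 1)
      nlinarith
  have expand : p ^ β * p ^ (2:ℕ) + q ^ β * q ^ (2:ℕ) - (p ^ β + q ^ β) * (p * q)
      = (p ^ (β+1) - q ^ (β+1)) * (p - q) := by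
    rw [← e1, ← e2]; ring
  linarith

/-- Monotonicity of z ↦ ‖z‖^β z for β > -1. -/
private lemma mono_inner {E : Type*} [NormedAddCommGroup E] [InnerProductSpace ℝ E]
    (β : ℝ) (hβ : -1 < β) (x y : E) :
    0 ≤ (‖x‖ ^ β) * ⟪x, x - y⟫ - (‖y‖ ^ β) * ⟪y, x - y⟫ := by
  have hx : ⟪x, x - y⟫ = ‖x‖^(2:ℕ) - ⟪x, y⟫ := by
    rw [inner_sub_right, real_inner_self_eq_norm_sq]
  have hy : ⟪y, x - y⟫ = ⟪x, y⟫ - ‖y‖^(2:ℕ) := by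
    rw [inner_sub_right, real_inner_self_eq_norm_sq, real_inner_comm]
  rw [hx, hy]
  have := mono_scalar β hβ (norm_nonneg x) (norm_nonneg y) (real_inner_le_norm x y)
  nlinarith [this]

/-- Coercivity of z ↦ ‖z‖^β z for β ≥ 0. -/
private lemma coercive_inner {E : Type*} [NormedAddCommGroup E] [InnerProductSpace ℝ E]
    (β : ℝ) (hβ : 0 ≤ β) (x y : E) :
    2 ^ (-1-β) * ‖x - y‖ ^ (β + 2) ≤
      (‖x‖ ^ β) * ⟪x, x - y⟫ - (‖y‖ ^ β) * ⟪y, x - y⟫ := by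
  set p := ‖x‖ with hp
  set q := ‖y‖ with hq
  set m := ‖x - y‖ with hm
  have hp0 : 0 ≤ p := norm_nonneg x
  have hq0 : 0 ≤ q := norm_nonneg y
  have hm0 : 0 ≤ m := norm_nonneg _
  have hpb : 0 ≤ p ^ β := Real.rpow_nonneg hp0 β
  have hqb : 0 ≤ q ^ β := Real.rpow_nonneg hq0 β
  have hx : ⟪x, x - y⟫ = p^(2:ℕ) - ⟪x, y⟫ := by
    rw [inner_sub_right, real_inner_self_eq_norm_sq]
  have hy : ⟪y, x - y⟫ = ⟪x, y⟫ - q^(2:ℕ) := by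
    rw [inner_sub_right, real_inner_self_eq_norm_sq, real_inner_comm]
  have hmsq : m^(2:ℕ) = p^(2:ℕ) - 2*⟪x,y⟫ + q^(2:ℕ) := norm_sub_sq_real x y
  -- sign term
  have key : 0 ≤ (p ^ β - q ^ β) * (p^(2:ℕ) - q^(2:ℕ)) := by
    rcases le_total p q with h | h
    · have h1 := Real.rpow_le_rpow hp0 h hβ
      have h2 := pow_le_pow_left₀ hp0 h 2
      nlinarith
    · have h1 := Real.rpow_le_rpow hq0 h hβ
      have h2 := pow_le_pow_left₀ hq0 h 2
      nlinarith
  -- lower bound on p^β + q^β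
  have hsum : (m/2) ^ β ≤ p ^ β + q ^ β := by
    have htri : m ≤ p + q := norm_sub_le x y
    rcases le_total p q with h | h
    · have : m/2 ≤ q := by linarith
      have := Real.rpow_le_rpow (by linarith : (0:ℝ) ≤ m/2) this hβ
      linarith
    · have : m/2 ≤ p := by linarith
      have := Real.rpow_le_rpow (by linarith : (0:ℝ) ≤ m/2) this hβ
      linarith
  -- 2 I ≥ (m/2)^β * m^2
  have h2I : (m/2) ^ β * m^(2:ℕ) ≤
      2 * ((p ^ β) * ⟪x, x - y⟫ - (q ^ β) * ⟪y, x - y⟫) := by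
    have hsq : 0 ≤ m^(2:ℕ) := sq_nonneg m
    have step : (m/2) ^ β * m^(2:ℕ) ≤ (p ^ β + q ^ β) * m^(2:ℕ) :=
      mul_le_mul_of_nonneg_right hsum hsq
    have ident : 2 * ((p ^ β) * ⟪x, x - y⟫ - (q ^ β) * ⟪y, x - y⟫)
        = (p ^ β + q ^ β) * m^(2:ℕ) + (p ^ β - q ^ β) * (p^(2:ℕ) - q^(2:ℕ)) := by
      rw [hx, hy, hmsq]; ring
    linarith
  -- rewrite the LHS constant
  have hconst : 2 ^ (-1-β) * m ^ (β + 2) = (m/2) ^ β * m^(2:ℕ) / 2 := by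
    rw [Real.div_rpow hm0 (by norm_num : (0:ℝ) ≤ 2)]
    rw [← rpow_mul_sq hm0 β (by linarith)]
    rw [show (-1-β : ℝ) = -(1+β) by ring, Real.rpow_neg (by norm_num : (0:ℝ) ≤ 2),
      Real.rpow_add (by norm_num : (0:ℝ) < 2), Real.rpow_one, mul_inv]
    ring
  linarith [h2I]

theorem stmt9 (d : ℕ) (hd : 1 ≤ d) (N : ℕ) (hN : 1 ≤ N)
    (α : ℝ) (hα0 : 0 < α) (hα1 : α < 1)
    (e : Fin N → ℝ) (hmono : StrictMono e) (hepos : ∀ i, 0 < e i)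
    (astar : ℝ) (hstar : 0 < astar)
    (am1 a0 : ℝ) (a : Fin N → ℝ)
    (ham1 : astar ≤ am1) (ha0 : astar ≤ a0)
    (haN : astar ≤ a ⟨N - 1, by omega⟩) (ha : ∀ i, 0 ≤ a i)
    (F : ℝ → ℝ)
    (hF : F = fun w => am1 * w ^ (-α) + a0 + ∑ i, a i * w ^ (e i))
    (s : ℝ) (hs : s = e ⟨N - 1, by omega⟩ + 2) :
    ∀ x y : EuclideanSpace ℝ (Fin d),
      ⟪F ‖x‖ • x - F ‖y‖ • y, x - y⟫ ≥
        astar * (1 - α) / (2 ^ (s - 1) * (s - 1)) * ‖x - y‖ ^ s := by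
  intro x y
  set j : Fin N := ⟨N - 1, by omega⟩ with hj
  set u : ℝ := ⟪x, x - y⟫ with hu
  set v : ℝ := ⟪y, x - y⟫ with hv
  set p := ‖x‖ with hp
  set q := ‖y‖ with hq
  set m := ‖x - y‖ with hm
  have hm0 : 0 ≤ m := norm_nonneg _
  have hms : 0 ≤ m ^ s := Real.rpow_nonneg hm0 s
  -- decompose the inner product
  have hT : ⟪F ‖x‖ • x - F ‖y‖ • y, x - y⟫ = F p * u - F q * v := by
    rw [inner_sub_left, real_inner_smul_left, real_inner_smul_left]
  have hdecomp : F p * u - F q * v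
      = am1 * (p ^ (-α) * u - q ^ (-α) * v) + a0 * (p ^ (0:ℝ) * u - q ^ (0:ℝ) * v)
        + ∑ i, a i * (p ^ (e i) * u - q ^ (e i) * v) := by
    have hsx : ∑ i, a i * (p ^ (e i) * u - q ^ (e i) * v)
        = (∑ i, a i * p ^ (e i)) * u - (∑ i, a i * q ^ (e i)) * v := by
      rw [Finset.sum_mul, Finset.sum_mul, ← Finset.sum_sub_distrib]
      exact Finset.sum_congr rfl fun i _ => by ring
    rw [hF, hsx]
    simp only [Real.rpow_zero]
    ring
  -- nonnegativity of each term
  have h1 : 0 ≤ am1 * (p ^ (-α) * u - q ^ (-α) * v) :=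
    mul_nonneg (by linarith) (mono_inner (-α) (by linarith) x y)
  have h2 : 0 ≤ a0 * (p ^ (0:ℝ) * u - q ^ (0:ℝ) * v) :=
    mul_nonneg (by linarith) (mono_inner 0 (by norm_num) x y)
  -- sum bounded below by the j term
  have hterm : ∀ i ∈ Finset.univ, (0:ℝ) ≤ a i * (p ^ (e i) * u - q ^ (e i) * v) := by
    intro i _
    exact mul_nonneg (ha i) (mono_inner (e i) (by linarith [hepos i]) x y)
  have hsum : a j * (p ^ (e j) * u - q ^ (e j) * v)
      ≤ ∑ i, a i * (p ^ (e i) * u - q ^ (e i) * v) :=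
    Finset.single_le_sum hterm (Finset.mem_univ j)
  -- lower bound for the j term
  have hcoer := coercive_inner (e j) (le_of_lt (hepos j)) x y
  have hterm_j : astar * (2 ^ (1 - s) * m ^ s) ≤ a j * (p ^ (e j) * u - q ^ (e j) * v) := by
    have hexp : (2:ℝ) ^ (-1 - e j) * m ^ (e j + 2) = 2 ^ (1-s) * m ^ s := by
      rw [hs]; ring_nf
    have hb : 0 ≤ 2 ^ (1-s) * m ^ s :=
      mul_nonneg (Real.rpow_nonneg (by norm_num) _) hms
    calc astar * (2 ^ (1-s) * m ^ s) ≤ a j * (2 ^ (1-s) * m ^ s) :=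
          mul_le_mul_of_nonneg_right haN hb
      _ ≤ a j * (p ^ (e j) * u - q ^ (e j) * v) := by
          apply mul_le_mul_of_nonneg_left _ (by linarith [hstar, haN])
          rw [← hexp]; exact hcoer
  -- constant comparison
  have hs1 : 1 < s - 1 := by
    have := hepos j; rw [hs]; linarith
  have h2s : (0:ℝ) < 2 ^ (s-1) := Real.rpow_pos_of_pos (by norm_num) _
  have hconst : astar * (1 - α) / (2 ^ (s - 1) * (s - 1)) ≤ astar * 2 ^ (1-s) := by
    rw [show (1-s:ℝ) = -(s-1) by ring, Real.rpow_neg (by norm_num : (0:ℝ) ≤ 2)]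
    rw [div_le_iff₀ (by positivity)]
    have : astar * (2 ^ (s-1))⁻¹ * (2 ^ (s-1) * (s-1)) = astar * (s-1) := by
      field_simp
    rw [this]
    nlinarith
  have hfinal : astar * (1 - α) / (2 ^ (s - 1) * (s - 1)) * m ^ s
      ≤ astar * 2 ^ (1-s) * m ^ s := mul_le_mul_of_nonneg_right hconst hms
  rw [ge_iff_le, hT, hdecomp]
  calc astar * (1 - α) / (2 ^ (s - 1) * (s - 1)) * m ^ s
      ≤ astar * 2 ^ (1-s) * m ^ s := hfinal
    _ = astar * (2 ^ (1-s) * m ^ s) := by ring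
    _ ≤ a j * (p ^ (e j) * u - q ^ (e j) * v) := hterm_j
    _ ≤ ∑ i, a i * (p ^ (e i) * u - q ^ (e i) * v) := hsum
    _ ≤ am1 * (p ^ (-α) * u - q ^ (-α) * v) + a0 * (p ^ (0:ℝ) * u - q ^ (0:ℝ) * v)
        + ∑ i, a i * (p ^ (e i) * u - q ^ (e i) * v) := by linarith
end

section
/- (Discrete Gronwall, backward difference form.) Let {a_n}, {b_n}, {g_n} be nonnegative sequences satisfying (a_n − a_{n−1})/Δt − a_n + b_n ≤ g_n for all n ≥ 1, where 0 < Δt < 1. Then a_n + Δt Σ_{i=1}^n b_i ≤ e^{nΔt/(1−Δt)} ( a₀ + Δt Σ_{i=1}^n g_i ) for all n ≥ 1. -/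
theorem stmt14 (Δt : ℝ) (hΔ0 : 0 < Δt) (hΔ1 : Δt < 1)
    (a b g : ℕ → ℝ)
    (ha : ∀ n, 0 ≤ a n) (hb : ∀ n, 0 ≤ b n) (hg : ∀ n, 0 ≤ g n)
    (hrec : ∀ n, 1 ≤ n → (a n - a (n - 1)) / Δt - a n + b n ≤ g n) :
    ∀ n, 1 ≤ n →
      a n + Δt * ∑ i ∈ Finset.Icc 1 n, b i ≤
        Real.exp ((n : ℝ) * Δt / (1 - Δt)) * (a 0 + Δt * ∑ i ∈ Finset.Icc 1 n, g i) := by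
  have h1 : (0:ℝ) < 1 - Δt := by linarith
  set lam : ℝ := (1 - Δt)⁻¹ with hlam
  have hml : (1 - Δt) * lam = 1 := mul_inv_cancel₀ (ne_of_gt h1)
  have hlampos : 0 < lam := inv_pos.mpr h1
  have hlam1 : 1 ≤ lam := by nlinarith
  have key : ∀ m, a m + Δt * ∑ i ∈ Finset.Icc 1 m, b i ≤
      lam ^ m * (a 0 + Δt * ∑ i ∈ Finset.Icc 1 m, g i) := by
    intro m
    induction m with
    | zero => simp
    | succ k ih =>
      have hr := hrec (k+1) (by omega)
      simp only [Nat.add_sub_cancel] at hr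
      have hr2 : a (k+1) - a k ≤ (g (k+1) + a (k+1) - b (k+1)) * Δt := by
        rw [← div_le_iff₀ hΔ0]; linarith
      have hSb : 0 ≤ ∑ i ∈ Finset.Icc 1 k, b i :=
        Finset.sum_nonneg fun i _ => hb i
      have hSg : 0 ≤ ∑ i ∈ Finset.Icc 1 k, g i :=
        Finset.sum_nonneg fun i _ => hg i
      have hpow1 : 1 ≤ lam ^ k := one_le_pow₀ hlam1
      rw [Finset.sum_Icc_succ_top (by omega : 1 ≤ k+1),
          Finset.sum_Icc_succ_top (by omega : 1 ≤ k+1)]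
      have step1 : a (k+1) + Δt * ∑ i ∈ Finset.Icc 1 k, b i + Δt * b (k+1) ≤
          lam * (a k + Δt * ∑ i ∈ Finset.Icc 1 k, b i + Δt * g (k+1)) := by
        rw [← mul_le_mul_iff_right₀ h1]
        have heq : (1 - Δt) * (lam * (a k + Δt * ∑ i ∈ Finset.Icc 1 k, b i + Δt * g (k+1)))
            = a k + Δt * ∑ i ∈ Finset.Icc 1 k, b i + Δt * g (k+1) := by
          rw [← mul_assoc, hml, one_mul]
        rw [heq]
        nlinarith [hr2, mul_nonneg (mul_nonneg hΔ0.le hΔ0.le) hSb,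
          mul_nonneg (mul_nonneg hΔ0.le hΔ0.le) (hb (k+1)),
          mul_nonneg hΔ0.le hSb]
      have step2 : lam * (a k + Δt * ∑ i ∈ Finset.Icc 1 k, b i + Δt * g (k+1)) ≤
          lam * (lam ^ k * (a 0 + Δt * ∑ i ∈ Finset.Icc 1 k, g i) + Δt * g (k+1)) := by
        apply mul_le_mul_of_nonneg_left _ hlampos.le
        linarith [ih]
      have hlamle : lam ≤ lam ^ (k+1) := by
        calc lam = 1 * lam := (one_mul lam).symm
          _ ≤ lam ^ k * lam := mul_le_mul_of_nonneg_right hpow1 hlampos.le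
          _ = lam ^ (k+1) := (pow_succ lam k).symm
      have step3 : lam * Δt * g (k+1) ≤ lam ^ (k+1) * Δt * g (k+1) := by
        apply mul_le_mul_of_nonneg_right _ (hg (k+1))
        exact mul_le_mul_of_nonneg_right hlamle hΔ0.le
      have hps : lam ^ (k+1) = lam * lam ^ k := by ring
      calc a (k+1) + Δt * (∑ i ∈ Finset.Icc 1 k, b i + b (k+1))
          = a (k+1) + Δt * ∑ i ∈ Finset.Icc 1 k, b i + Δt * b (k+1) := by ring
        _ ≤ lam * (a k + Δt * ∑ i ∈ Finset.Icc 1 k, b i + Δt * g (k+1)) := step1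
        _ ≤ lam * (lam ^ k * (a 0 + Δt * ∑ i ∈ Finset.Icc 1 k, g i) + Δt * g (k+1)) := step2
        _ = lam ^ (k+1) * (a 0 + Δt * ∑ i ∈ Finset.Icc 1 k, g i) + lam * Δt * g (k+1) := by
            rw [hps]; ring
        _ ≤ lam ^ (k+1) * (a 0 + Δt * ∑ i ∈ Finset.Icc 1 k, g i) + lam ^ (k+1) * Δt * g (k+1) := by
            linarith [step3]
        _ = lam ^ (k+1) * (a 0 + Δt * (∑ i ∈ Finset.Icc 1 k, g i + g (k+1))) := by ring
  intro n hn
  have hE : lam ≤ Real.exp (Δt / (1 - Δt)) := by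
    have h := Real.add_one_le_exp (Δt / (1 - Δt))
    have : Δt / (1 - Δt) + 1 = lam := by
      field_simp
      rw [mul_comm]
      linear_combination hml.symm
    linarith [this ▸ h]
  have hEn : lam ^ n ≤ Real.exp ((n : ℝ) * Δt / (1 - Δt)) := by
    have : Real.exp ((n : ℝ) * Δt / (1 - Δt)) = Real.exp (Δt / (1 - Δt)) ^ n := by
      rw [← Real.exp_nat_mul]; ring_nf
    rw [this]
    exact pow_le_pow_left₀ hlampos.le hE n
  have hC : 0 ≤ a 0 + Δt * ∑ i ∈ Finset.Icc 1 n, g i := by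
    have : 0 ≤ ∑ i ∈ Finset.Icc 1 n, g i := Finset.sum_nonneg fun i _ => hg i
    exact add_nonneg (ha 0) (mul_nonneg hΔ0.le this)
  calc a n + Δt * ∑ i ∈ Finset.Icc 1 n, b i
      ≤ lam ^ n * (a 0 + Δt * ∑ i ∈ Finset.Icc 1 n, g i) := key n
    _ ≤ Real.exp ((n : ℝ) * Δt / (1 - Δt)) * (a 0 + Δt * ∑ i ∈ Finset.Icc 1 n, g i) :=
        mul_le_mul_of_nonneg_right hEn hC
end
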